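/- Let A be the generator of a strongly continuous semigroup T(t) on a Banach space X and choose t₀ > 0 arbitrarily. For every ε, τ > 0 there exists q ∈ (0,1) such that for every bounded linear operator D : X₁ → X satisfying ∫₀^{t₀} ‖D T(s)x‖ ds ≤ q‖x‖ for all x ∈ dom(A), the perturbed semigroup T_D generated by A + D satisfies ‖T(t) − T_D(t)‖ < ε for all t ∈ [0, τ]. -/

import Mathlib

open MeasureTheory Filter Set
open scoped Topology Real

variable {X : Type*}

/-- A strongly continuous (C₀) semigroup on a Banach space `X`. -/
def IsC0Semigroup [NormedAddCommGroup X] [NormedSpace ℂ X]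
    (T : ℝ → X →L[ℂ] X) : Prop :=
  T 0 = 1 ∧
  (∀ t s : ℝ, 0 ≤ t → 0 ≤ s → T (t + s) = (T t).comp (T s)) ∧
  (∀ x : X, ContinuousOn (fun t => T t x) (Set.Ici (0 : ℝ)))

/-- `A`, with domain `domA`, is the generator of the semigroup `T`. -/
def IsGenerator [NormedAddCommGroup X] [NormedSpace ℂ X]
    (T : ℝ → X →L[ℂ] X) (domA : Set X) (A : X → X) : Prop :=
  (∀ x : X, x ∈ domA ↔ ∃ y : X,
      Tendsto (fun t : ℝ => t⁻¹ • (T t x - x)) (𝓝[>] (0 : ℝ)) (𝓝 y)) ∧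
  (∀ x ∈ domA,
      Tendsto (fun t : ℝ => t⁻¹ • (T t x - x)) (𝓝[>] (0 : ℝ)) (𝓝 (A x)))

/-- Power stability of a bounded operator. -/
def PowerStable [NormedAddCommGroup X] [NormedSpace ℂ X] (Δ : X →L[ℂ] X) : Prop :=
  ∃ M : ℝ, 1 ≤ M ∧ ∃ θ : ℝ, θ ∈ Set.Ioo (0 : ℝ) 1 ∧ ∀ k : ℕ, ‖Δ ^ k‖ ≤ M * θ ^ k

/-- `x` is the sampled-data solution with initial state `x0`. -/
def IsSdSolution [NormedAddCommGroup X] [NormedSpace ℂ X]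
    (T : ℝ → X →L[ℂ] X) (B : X →L[ℂ] X) (τ : ℝ) (x0 : X) (x : ℝ → X) : Prop :=
  x 0 = x0 ∧
  ∀ (k : ℕ) (t : ℝ), 0 < t → t ≤ τ →
    x (k * τ + t) = T t (x (k * τ)) + ∫ s in (0 : ℝ)..t, T s (B (x (k * τ)))

/-- The sampled-data system is exponentially stable with decay rate greater than `ω`. -/
def SdExpStable [NormedAddCommGroup X] [NormedSpace ℂ X]
    (T : ℝ → X →L[ℂ] X) (B : X →L[ℂ] X) (τ ω : ℝ) : Prop :=
  ∃ M : ℝ, 1 ≤ M ∧ ∃ ω' : ℝ, ω < ω' ∧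
    ∀ (x0 : X) (x : ℝ → X), IsSdSolution T B τ x0 x →
      ∀ t : ℝ, 0 ≤ t → ‖x t‖ ≤ M * Real.exp (-ω' * t) * ‖x0‖

/-- `D` is a bounded linear operator from `X₁ = (dom A, ‖·‖ + ‖A ·‖)` to `X`,
represented as a function on `X` that is linear and graph-norm bounded on `dom A`. -/
def IsGraphBoundedOp [NormedAddCommGroup X] [NormedSpace ℂ X]
    (domA : Set X) (A : X → X) (D : X → X) : Prop :=
  (∀ x ∈ domA, ∀ y ∈ domA, D (x + y) = D x + D y) ∧
  (∀ (c : ℂ), ∀ x ∈ domA, D (c • x) = c • D x) ∧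
  (∃ C : ℝ, ∀ x ∈ domA, ‖D x‖ ≤ C * (‖x‖ + ‖A x‖))

section Aux
variable [NormedAddCommGroup X] [NormedSpace ℂ X]

lemma C0.bound [CompleteSpace X] {S : ℝ → X →L[ℂ] X} (hS : IsC0Semigroup S) (b : ℝ) :
    ∃ M : ℝ, 1 ≤ M ∧ ∀ t ∈ Icc (0:ℝ) b, ‖S t‖ ≤ M := by
  rcases le_or_gt 0 b with hb | hb
  · have h : ∀ x : X, ∃ C, ∀ i : Icc (0:ℝ) b, ‖S i x‖ ≤ C := by
      intro x
      obtain ⟨C, hC⟩ := isCompact_Icc.exists_bound_of_continuousOn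
        ((hS.2.2 x).mono Icc_subset_Ici_self)
      exact ⟨C, fun i => hC i i.2⟩
    obtain ⟨C', hC'⟩ := banach_steinhaus h
    exact ⟨max C' 1, le_max_right _ _, fun t ht => le_trans (hC' ⟨t, ht⟩) (le_max_left _ _)⟩
  · exact ⟨1, le_rfl, fun t ht => absurd (ht.1.trans ht.2) (not_le.2 hb)⟩

lemma C0.apply_tendsto {S : ℝ → X →L[ℂ] X} (hS : IsC0Semigroup S) {b M : ℝ}
    (hM : ∀ t ∈ Icc (0:ℝ) b, ‖S t‖ ≤ M) {α : Type*} {l : Filter α} {φ : α → ℝ} {y : α → X}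
    {u : ℝ} {y₀ : X} (hu : u ∈ Icc (0:ℝ) b) (hφ : Tendsto φ l (𝓝 u))
    (hφ' : ∀ᶠ a in l, φ a ∈ Icc (0:ℝ) b) (hy : Tendsto y l (𝓝 y₀)) :
    Tendsto (fun a => S (φ a) (y a)) l (𝓝 (S u y₀)) := by
  have h1 : Tendsto (fun a => S (φ a) y₀) l (𝓝 (S u y₀)) := by
    have hc : ContinuousWithinAt (fun t => S t y₀) (Ici 0) u := hS.2.2 y₀ u hu.1
    exact hc.tendsto.comp (tendsto_nhdsWithin_iff.mpr ⟨hφ, hφ'.mono fun a ha => ha.1⟩)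
  have h2 : Tendsto (fun a => S (φ a) (y a) - S (φ a) y₀) l (𝓝 0) := by
    refine squeeze_zero_norm' (a := fun a => M * ‖y a - y₀‖) ?_ ?_
    · filter_upwards [hφ'] with a ha
      calc ‖S (φ a) (y a) - S (φ a) y₀‖ = ‖S (φ a) (y a - y₀)‖ := by rw [map_sub]
        _ ≤ ‖S (φ a)‖ * ‖y a - y₀‖ := (S (φ a)).le_opNorm _
        _ ≤ M * ‖y a - y₀‖ := mul_le_mul_of_nonneg_right (hM _ ha) (norm_nonneg _)
    · have := (tendsto_iff_norm_sub_tendsto_zero.mp hy).const_mul M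
      simpa using this
  have := h2.add h1
  simpa using this


/-- If the slope of the orbit of `x` at `0` tends to `g`, then at `u ≥ 0` the translated
slope tends to `S u g`. -/
lemma C0.slope_zero_translate {S : ℝ → X →L[ℂ] X} (hS : IsC0Semigroup S) {x g : X}
    (hg : Tendsto (fun h : ℝ => h⁻¹ • (S h x - x)) (𝓝[>] (0:ℝ)) (𝓝 g)) {u : ℝ} (hu : 0 ≤ u) :
    Tendsto (fun h : ℝ => h⁻¹ • (S h (S u x) - S u x)) (𝓝[>] (0:ℝ)) (𝓝 (S u g)) := by
  have key : ∀ᶠ h in 𝓝[>] (0:ℝ),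
      S u (h⁻¹ • (S h x - x)) = h⁻¹ • (S h (S u x) - S u x) := by
    filter_upwards [self_mem_nhdsWithin] with h hh
    have hcomm : S h (S u x) = S u (S h x) := by
      have e1 := hS.2.1 h u (le_of_lt hh) hu
      have e2 := hS.2.1 u h hu (le_of_lt hh)
      calc S h (S u x) = S (h + u) x := by rw [e1]; rfl
        _ = S (u + h) x := by rw [add_comm]
        _ = S u (S h x) := by rw [e2]; rfl
    rw [(S u).map_smul_of_tower, map_sub, hcomm]
  have h1 : Tendsto (fun h : ℝ => S u (h⁻¹ • (S h x - x))) (𝓝[>] (0:ℝ)) (𝓝 (S u g)) :=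
    ((S u).continuous.tendsto g).comp hg
  exact h1.congr' key

lemma C0.tendsto_slope_right {S : ℝ → X →L[ℂ] X} (hS : IsC0Semigroup S) {x g : X}
    (hg : Tendsto (fun h : ℝ => h⁻¹ • (S h x - x)) (𝓝[>] (0:ℝ)) (𝓝 g)) {u : ℝ} (hu : 0 ≤ u) :
    Tendsto (slope (fun s => S s x) u) (𝓝[>] u) (𝓝 (S u g)) := by
  have hmap : Tendsto (fun v : ℝ => v - u) (𝓝[>] u) (𝓝[>] (0:ℝ)) := by
    refine tendsto_nhdsWithin_iff.mpr ⟨?_, ?_⟩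
    · have h0 : Tendsto (fun v : ℝ => v - u) (𝓝 u) (𝓝 (u - u)) :=
        (continuous_id.sub continuous_const).tendsto u
      rw [sub_self] at h0
      exact h0.mono_left nhdsWithin_le_nhds
    · exact eventually_mem_nhdsWithin.mono fun v hv => Set.mem_Ioi.2 (sub_pos.2 (Set.mem_Ioi.1 hv))
  have h1 : Tendsto (fun v : ℝ => (v - u)⁻¹ • (S (v - u) (S u x) - S u x)) (𝓝[>] u)
      (𝓝 (S u g)) := (C0.slope_zero_translate hS hg hu).comp hmap
  refine h1.congr' ?_
  filter_upwards [self_mem_nhdsWithin] with v hv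
  have hvu : (0:ℝ) ≤ v - u := (sub_pos.2 hv).le
  have : S (v - u) (S u x) = S v x := by
    have := hS.2.1 (v - u) u hvu hu
    rw [show v - u + u = v by ring] at this
    rw [this]; rfl
  rw [slope_def_module, this]

lemma C0.tendsto_slope_left {S : ℝ → X →L[ℂ] X} (hS : IsC0Semigroup S) {b M : ℝ}
    (hM : ∀ t ∈ Icc (0:ℝ) b, ‖S t‖ ≤ M) {x g : X}
    (hg : Tendsto (fun h : ℝ => h⁻¹ • (S h x - x)) (𝓝[>] (0:ℝ)) (𝓝 g)) {u : ℝ}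
    (hu : 0 < u) (hub : u ≤ b) :
    Tendsto (slope (fun s => S s x) u) (𝓝[<] u) (𝓝 (S u g)) := by
  have hmap : Tendsto (fun v : ℝ => u - v) (𝓝[<] u) (𝓝[>] (0:ℝ)) := by
    refine tendsto_nhdsWithin_iff.mpr ⟨?_, ?_⟩
    · have h0 : Tendsto (fun v : ℝ => u - v) (𝓝 u) (𝓝 (u - u)) :=
        (continuous_const.sub continuous_id).tendsto u
      rw [sub_self] at h0
      exact h0.mono_left nhdsWithin_le_nhds
    · exact eventually_mem_nhdsWithin.mono fun v hv => Set.mem_Ioi.2 (sub_pos.2 (Set.mem_Iio.1 hv))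
  have hy : Tendsto (fun v : ℝ => (u - v)⁻¹ • (S (u - v) x - x)) (𝓝[<] u) (𝓝 g) :=
    hg.comp hmap
  have h1 : Tendsto (fun v : ℝ => S v ((u - v)⁻¹ • (S (u - v) x - x))) (𝓝[<] u)
      (𝓝 (S u g)) := by
    refine C0.apply_tendsto hS hM ⟨hu.le, hub⟩ (nhdsWithin_le_nhds (s := Iio u)) ?_ hy
    · filter_upwards [Ioo_mem_nhdsLT_of_mem (⟨hu, le_rfl⟩ : u ∈ Ioc 0 u)] with v hv
      exact ⟨hv.1.le, hv.2.le.trans hub⟩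
  refine h1.congr' ?_
  filter_upwards [Ioo_mem_nhdsLT_of_mem (⟨hu, le_rfl⟩ : u ∈ Ioc 0 u)] with v hv
  have hvu : (0:ℝ) ≤ u - v := (sub_pos.2 hv.2).le
  have hSux : S u x = S v (S (u - v) x) := by
    have := hS.2.1 v (u - v) hv.1.le hvu
    rw [show v + (u - v) = u by ring] at this
    rw [this]; rfl
  rw [slope_def_module, hSux, ← map_sub, ← (S v).map_smul_of_tower]
  congr 1
  rw [show (v - u : ℝ) = -(u - v) by ring, inv_neg, neg_smul, ← smul_neg, neg_sub]


section Gen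
variable {T : ℝ → X →L[ℂ] X} {domA : Set X} {A : X → X}
    (hT : IsC0Semigroup T) (hA : IsGenerator T domA A)
include hT hA

lemma Gen.mem_orbit {x : X} (hx : x ∈ domA) {u : ℝ} (hu : 0 ≤ u) :
    T u x ∈ domA ∧ A (T u x) = T u (A x) := by
  have h := C0.slope_zero_translate hT (hA.2 x hx) hu
  have hmem : T u x ∈ domA := (hA.1 _).mpr ⟨_, h⟩
  exact ⟨hmem, tendsto_nhds_unique (hA.2 _ hmem) h⟩

omit hT in
lemma Gen.mem_sub {x y : X} (hx : x ∈ domA) (hy : y ∈ domA) :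
    x - y ∈ domA ∧ A (x - y) = A x - A y := by
  have h : Tendsto (fun t : ℝ => t⁻¹ • (T t (x - y) - (x - y))) (𝓝[>] (0:ℝ))
      (𝓝 (A x - A y)) := by
    have := (hA.2 x hx).sub (hA.2 y hy)
    refine this.congr fun t => ?_
    rw [← smul_sub, map_sub]
    congr 1
    abel
  exact ⟨(hA.1 _).mpr ⟨_, h⟩, tendsto_nhds_unique (hA.2 _ ((hA.1 _).mpr ⟨_, h⟩)) h⟩

omit hT in
lemma Gen.mem_smul_real {x : X} (hx : x ∈ domA) (r : ℝ) :
    r • x ∈ domA ∧ A (r • x) = r • A x := by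
  have h : Tendsto (fun t : ℝ => t⁻¹ • (T t (r • x) - r • x)) (𝓝[>] (0:ℝ))
      (𝓝 (r • A x)) := by
    have := (hA.2 x hx).const_smul r
    refine this.congr fun t => ?_
    rw [(T t).map_smul_of_tower, ← smul_sub, smul_comm]
  exact ⟨(hA.1 _).mpr ⟨_, h⟩, tendsto_nhds_unique (hA.2 _ ((hA.1 _).mpr ⟨_, h⟩)) h⟩

omit hT in
lemma Gen.mem_smul {x : X} (hx : x ∈ domA) (c : ℂ) :
    c • x ∈ domA ∧ A (c • x) = c • A x := by
  have h : Tendsto (fun t : ℝ => t⁻¹ • (T t (c • x) - c • x)) (𝓝[>] (0:ℝ))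
      (𝓝 (c • A x)) := by
    have := (hA.2 x hx).const_smul c
    refine this.congr fun t => ?_
    rw [(T t).map_smul, ← smul_sub, smul_comm]
  exact ⟨(hA.1 _).mpr ⟨_, h⟩, tendsto_nhds_unique (hA.2 _ ((hA.1 _).mpr ⟨_, h⟩)) h⟩

omit hT in
lemma Gen.D_sub {D : X → X} (hD : IsGraphBoundedOp domA A D) {x y : X}
    (hx : x ∈ domA) (hy : y ∈ domA) : D (x - y) = D x - D y := by
  have hny : (-1 : ℂ) • y ∈ domA := (Gen.mem_smul hA hy (-1)).1
  have : D (x - y) = D (x + (-1 : ℂ) • y) := by rw [neg_one_smul, sub_eq_add_neg]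
  rw [this, hD.1 x hx _ hny, hD.2.1 (-1) y hy, neg_one_smul, sub_eq_add_neg]

/-- Continuity of `s ↦ D (T s x)` on `[0, ∞)` for `x` in the domain. -/
lemma Gen.D_orbit_continuous {D : X → X} (hD : IsGraphBoundedOp domA A D) {x : X}
    (hx : x ∈ domA) : ContinuousOn (fun s => D (T s x)) (Ici (0:ℝ)) := by
  obtain ⟨C, hC⟩ := hD.2.2
  intro s₀ hs₀
  have hmem : ∀ s ∈ Ici (0:ℝ), T s x ∈ domA := fun s hs => (Gen.mem_orbit hT hA hx hs).1
  rw [ContinuousWithinAt, tendsto_iff_norm_sub_tendsto_zero]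
  have hbd : ∀ s ∈ Ici (0:ℝ), ‖D (T s x) - D (T s₀ x)‖ ≤
      C * (‖T s x - T s₀ x‖ + ‖T s (A x) - T s₀ (A x)‖) := by
    intro s hs
    have hsub := Gen.mem_sub hA (hmem s hs) (hmem s₀ hs₀)
    rw [← Gen.D_sub hA hD (hmem s hs) (hmem s₀ hs₀)]
    have := hC _ hsub.1
    rwa [hsub.2, (Gen.mem_orbit hT hA hx hs).2, (Gen.mem_orbit hT hA hx hs₀).2] at this
  refine squeeze_zero_norm'
    (a := fun s => C * (‖T s x - T s₀ x‖ + ‖T s (A x) - T s₀ (A x)‖)) ?_ ?_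
  · filter_upwards [self_mem_nhdsWithin] with s hs
    rw [Real.norm_eq_abs, abs_of_nonneg (norm_nonneg _)]
    exact hbd s hs
  · have h1 : Tendsto (fun s => ‖T s x - T s₀ x‖) (𝓝[Ici 0] s₀) (𝓝 0) :=
      tendsto_iff_norm_sub_tendsto_zero.mp ((hT.2.2 x s₀ hs₀).tendsto)
    have h2 : Tendsto (fun s => ‖T s (A x) - T s₀ (A x)‖) (𝓝[Ici 0] s₀) (𝓝 0) :=
      tendsto_iff_norm_sub_tendsto_zero.mp ((hT.2.2 (A x) s₀ hs₀).tendsto)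
    have := ((h1.add h2).const_mul C)
    simpa using this

end Gen

/-- Averages of a continuous function tend to its value. -/
lemma avg_tendsto [CompleteSpace X] {g : ℝ → X} (hg : ContinuousOn g (Ici (0:ℝ))) {c : ℝ} (hc : 0 ≤ c) :
    Tendsto (fun h : ℝ => h⁻¹ • ∫ s in c..(c + h), g s) (𝓝[>] (0:ℝ)) (𝓝 (g c)) := by
  rw [Metric.tendsto_nhdsWithin_nhds]
  intro ε hε
  obtain ⟨δ, hδ, hδ'⟩ := Metric.continuousWithinAt_iff.mp (hg c hc) (ε/2) (by positivity)
  refine ⟨δ, hδ, fun {h} hh hhd => ?_⟩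
  have h0 : (0:ℝ) < h := hh
  have hd : h < δ := by
    rw [Real.dist_eq, sub_zero, abs_of_pos h0] at hhd
    exact hhd
  have hint : IntervalIntegrable g volume c (c + h) := by
    apply ContinuousOn.intervalIntegrable
    apply hg.mono
    rw [uIcc_of_le (by linarith)]
    exact fun s hs => le_trans hc hs.1
  have hintc : IntervalIntegrable (fun _ : ℝ => g c) volume c (c + h) :=
    intervalIntegrable_const
  have hsub : (∫ s in c..(c + h), g s) - h • g c = ∫ s in c..(c + h), (g s - g c) := by
    rw [intervalIntegral.integral_sub hint hintc, intervalIntegral.integral_const]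
    congr 1
    rw [add_sub_cancel_left]
  have hbound : ‖∫ s in c..(c + h), (g s - g c)‖ ≤ ε/2 * |c + h - c| := by
    apply intervalIntegral.norm_integral_le_of_norm_le_const
    intro s hs
    rw [uIoc_of_le (by linarith)] at hs
    have hs0 : s ∈ Ici (0:ℝ) := le_trans hc hs.1.le
    have hsd : dist s c < δ := by
      rw [Real.dist_eq, abs_of_nonneg (by linarith [hs.1.le] : (0:ℝ) ≤ s - c)]
      linarith [hs.2]
    have := hδ' hs0 hsd
    rw [dist_eq_norm] at this
    exact this.le
  rw [dist_eq_norm]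
  have heq : h⁻¹ • (∫ s in c..(c + h), g s) - g c
      = h⁻¹ • (∫ s in c..(c + h), (g s - g c)) := by
    rw [← hsub, smul_sub, smul_smul, inv_mul_cancel₀ h0.ne', one_smul]
  rw [heq, norm_smul, Real.norm_eq_abs, abs_of_pos (inv_pos.2 h0)]
  rw [add_sub_cancel_left, abs_of_pos h0] at hbound
  calc h⁻¹ * ‖∫ s in c..(c + h), (g s - g c)‖ ≤ h⁻¹ * (ε/2 * h) := by
        apply mul_le_mul_of_nonneg_left _ (inv_pos.2 h0).le
        simpa using hbound
    _ = ε/2 := by field_simp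
    _ < ε := by linarith

section Dense
variable [CompleteSpace X] {T : ℝ → X →L[ℂ] X} {domA : Set X} {A : X → X}
    (hT : IsC0Semigroup T) (hA : IsGenerator T domA A)
include hT hA

lemma Gen.dense : Dense domA := by
  intro x
  have horb : ContinuousOn (fun s => T s x) (Ici (0:ℝ)) := hT.2.2 x
  have havg : Tendsto (fun t : ℝ => t⁻¹ • ∫ s in (0:ℝ)..t, T s x) (𝓝[>] (0:ℝ)) (𝓝 x) := by
    have := avg_tendsto horb (le_refl (0:ℝ))
    simp only [zero_add, hT.1, ContinuousLinearMap.one_apply] at this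
    exact this
  refine mem_closure_of_tendsto havg ?_
  filter_upwards [self_mem_nhdsWithin] with t ht
  have ht0 : (0:ℝ) < t := ht
  -- first: ∫ s in 0..t, T s x ∈ domA
  have hintgr : ∀ a c : ℝ, 0 ≤ a → 0 ≤ c → IntervalIntegrable (fun s => T s x) volume a c := by
    intro a c ha hc
    apply ContinuousOn.intervalIntegrable
    apply horb.mono
    intro s hs
    rcases le_total a c with h' | h'
    · rw [uIcc_of_le h'] at hs; exact le_trans ha hs.1
    · rw [uIcc_of_ge h'] at hs; exact le_trans hc hs.1
  have hmem : (∫ s in (0:ℝ)..t, T s x) ∈ domA := by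
    apply (hA.1 _).mpr
    refine ⟨T t x - x, ?_⟩
    have havg2 : Tendsto (fun h : ℝ => h⁻¹ • ∫ s in t..(t + h), T s x) (𝓝[>] (0:ℝ))
        (𝓝 (T t x)) := avg_tendsto horb ht0.le
    have havg3 : Tendsto (fun h : ℝ => h⁻¹ • ∫ s in (0:ℝ)..(0 + h), T s x) (𝓝[>] (0:ℝ))
        (𝓝 x) := by
      have := avg_tendsto horb (le_refl (0:ℝ))
      simp only [hT.1, ContinuousLinearMap.one_apply] at this
      exact this
    refine (havg2.sub havg3).congr' ?_
    filter_upwards [self_mem_nhdsWithin] with h hh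
    have hh0 : (0:ℝ) < h := hh
    have hTh : T h (∫ s in (0:ℝ)..t, T s x) = ∫ s in h..(t + h), T s x := by
      rw [← (T h).intervalIntegral_comp_comm (hintgr 0 t le_rfl ht0.le)]
      rw [intervalIntegral.integral_congr (g := fun s => T (s + h) x) ?_]
      · rw [intervalIntegral.integral_comp_add_right (fun s => T s x) h, zero_add]
      · intro s hs
        rw [uIcc_of_le ht0.le] at hs
        have := hT.2.1 h s hh0.le hs.1
        simp only [add_comm s h]
        rw [this]; rfl
    have hsplit : (∫ s in h..(t + h), T s x) - ∫ s in (0:ℝ)..t, T s x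
        = (∫ s in t..(t + h), T s x) - ∫ s in (0:ℝ)..h, T s x := by
      have e1 : (∫ s in h..t, T s x) + ∫ s in t..(t + h), T s x = ∫ s in h..(t + h), T s x :=
        intervalIntegral.integral_add_adjacent_intervals (hintgr h t hh0.le ht0.le)
          (hintgr t (t + h) ht0.le (by linarith))
      have e2 : (∫ s in (0:ℝ)..h, T s x) + ∫ s in h..t, T s x = ∫ s in (0:ℝ)..t, T s x :=
        intervalIntegral.integral_add_adjacent_intervals (hintgr 0 h le_rfl hh0.le)
          (hintgr h t hh0.le ht0.le)
      rw [← e1, ← e2]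
      abel
    rw [zero_add, ← smul_sub, hTh, hsplit]
  exact (Gen.mem_smul_real hA hmem t⁻¹).1

end Dense

lemma dense_opNorm_bound [CompleteSpace X] {E : X →L[ℂ] X} {S : Set X} (hS : Dense S)
    {K : ℝ} (hK : 0 ≤ K) (h : ∀ x ∈ S, ‖E x‖ ≤ K * ‖x‖) : ‖E‖ ≤ K := by
  refine E.opNorm_le_bound hK fun x => ?_
  have hcl : IsClosed {x : X | ‖E x‖ ≤ K * ‖x‖} :=
    isClosed_le E.continuous.norm (continuous_const.mul continuous_norm)
  exact hcl.closure_subset_iff.mpr h (hS x)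

end Aux

/-- Uniform-operator-topology continuity of the semigroup with respect to
Miyadera–Voigt perturbations of the generator. -/
theorem semigroup_close_under_MV_perturbation
    [NormedAddCommGroup X] [NormedSpace ℂ X] [CompleteSpace X]
    (T : ℝ → X →L[ℂ] X) (hT : IsC0Semigroup T)
    (domA : Set X) (A : X → X) (hA : IsGenerator T domA A)
    (t₀ : ℝ) (ht₀ : 0 < t₀) (ε τ : ℝ) (hε : 0 < ε) (hτ : 0 < τ) :
    ∃ q : ℝ, q ∈ Set.Ioo (0 : ℝ) 1 ∧
      ∀ D : X → X, IsGraphBoundedOp domA A D →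
        (∀ x ∈ domA, (∫ s in (0 : ℝ)..t₀, ‖D (T s x)‖) ≤ q * ‖x‖) →
        ∀ TD : ℝ → X →L[ℂ] X,
          IsC0Semigroup TD → IsGenerator TD domA (fun x => A x + D x) →
          ∀ t ∈ Set.Icc (0 : ℝ) τ, ‖T t - TD t‖ < ε := by
  classical
  set n : ℕ := ⌈τ / t₀⌉₊ with hn_def
  have hn_pos : 0 < n := Nat.ceil_pos.mpr (div_pos hτ ht₀)
  have hnR : (1:ℝ) ≤ (n:ℝ) := by exact_mod_cast hn_pos
  have hτn : τ ≤ (n:ℝ) * t₀ := by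
    have := Nat.le_ceil (τ / t₀)
    calc τ = (τ / t₀) * t₀ := by field_simp
      _ ≤ (n:ℝ) * t₀ := mul_le_mul_of_nonneg_right this ht₀.le
  set b : ℝ := (n:ℝ) * t₀ with hb_def
  have hb0 : 0 ≤ b := by positivity
  obtain ⟨M, hM1, hM⟩ := C0.bound hT b
  have hM0 : 0 < M := lt_of_lt_of_le one_pos hM1
  have hd_pos : (0:ℝ) < 4 * (n:ℝ) * M ^ 2 := by positivity
  set q : ℝ := min 1 ε / (4 * (n:ℝ) * M ^ 2) with hq_def
  have hq_pos : 0 < q := div_pos (lt_min one_pos hε) hd_pos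
  have hd4 : (4:ℝ) ≤ 4 * (n:ℝ) * M ^ 2 := by nlinarith
  have hq_le : q ≤ 1 / (4 * (n:ℝ) * M ^ 2) :=
    (div_le_div_iff_of_pos_right hd_pos).mpr (min_le_left 1 ε)
  have hq_le' : q ≤ ε / (4 * (n:ℝ) * M ^ 2) :=
    (div_le_div_iff_of_pos_right hd_pos).mpr (min_le_right 1 ε)
  have hq1 : q < 1 := by
    have h14 : (1:ℝ) / (4 * (n:ℝ) * M ^ 2) ≤ 1 / 4 :=
      one_div_le_one_div_of_le (by norm_num) hd4
    linarith
  refine ⟨q, ⟨hq_pos, hq1⟩, ?_⟩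
  intro D hD hDq TD hTD hTDgen
  have hdense : Dense domA := Gen.dense hT hA
  obtain ⟨M', hM'1, hM'⟩ := C0.bound hTD τ
  set Sset : Set ℝ := (fun s => ‖TD s‖) '' Icc (0:ℝ) τ with hSset_def
  have hSne : Sset.Nonempty := ⟨‖TD 0‖, 0, ⟨le_rfl, hτ.le⟩, rfl⟩
  have hSbd : BddAbove Sset := by
    refine ⟨M', ?_⟩
    rintro y ⟨s, hs, rfl⟩
    exact hM' s hs
  set N : ℝ := sSup Sset with hN_def
  have hN : ∀ s ∈ Icc (0:ℝ) τ, ‖TD s‖ ≤ N := fun s hs => le_csSup hSbd ⟨s, hs, rfl⟩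
  have hN0 : 0 ≤ N := le_trans (norm_nonneg _) (hN 0 ⟨le_rfl, hτ.le⟩)
  set J : ℝ := (n:ℝ) * q * M with hJ_def
  have hJ0 : 0 ≤ J := by positivity
  -- Step 3 : the integral bound along T
  have key : ∀ x ∈ domA, ∀ t' : ℝ, 0 ≤ t' → t' ≤ b →
      (∫ s in (0:ℝ)..t', ‖D (T s x)‖) ≤ J * ‖x‖ := by
    intro x hx
    have hDcont : ContinuousOn (fun s => D (T s x)) (Ici (0:ℝ)) :=
      Gen.D_orbit_continuous hT hA hD hx
    have hnc : ContinuousOn (fun s => ‖D (T s x)‖) (Ici (0:ℝ)) := hDcont.norm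
    have hint : ∀ a c : ℝ, 0 ≤ a → 0 ≤ c →
        IntervalIntegrable (fun s => ‖D (T s x)‖) volume a c := by
      intro a c ha hc
      apply ContinuousOn.intervalIntegrable
      apply hnc.mono
      intro s hs
      rcases le_total a c with h' | h'
      · rw [uIcc_of_le h'] at hs; exact le_trans ha hs.1
      · rw [uIcc_of_ge h'] at hs; exact le_trans hc hs.1
    have hblock : ∀ k : ℕ, (k:ℝ) * t₀ ≤ b →
        (∫ s in ((k:ℝ)*t₀)..(t₀ + (k:ℝ)*t₀), ‖D (T s x)‖) ≤ q * (M * ‖x‖) := by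
      intro k hk
      have hk0 : (0:ℝ) ≤ (k:ℝ) * t₀ := by positivity
      have hTk : T ((k:ℝ)*t₀) x ∈ domA := (Gen.mem_orbit hT hA hx hk0).1
      have e1 : (∫ s in (0:ℝ)..t₀, ‖D (T (s + (k:ℝ)*t₀) x)‖)
          = ∫ s in ((k:ℝ)*t₀)..(t₀ + (k:ℝ)*t₀), ‖D (T s x)‖ := by
        rw [intervalIntegral.integral_comp_add_right (fun s => ‖D (T s x)‖) ((k:ℝ)*t₀),
          zero_add]
      have e2 : (∫ s in (0:ℝ)..t₀, ‖D (T (s + (k:ℝ)*t₀) x)‖)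
          = ∫ s in (0:ℝ)..t₀, ‖D (T s (T ((k:ℝ)*t₀) x))‖ := by
        apply intervalIntegral.integral_congr
        intro s hs
        rw [uIcc_of_le ht₀.le] at hs
        have hcomp := hT.2.1 s ((k:ℝ)*t₀) hs.1 hk0
        show ‖D (T (s + (k:ℝ)*t₀) x)‖ = ‖D (T s (T ((k:ℝ)*t₀) x))‖
        rw [hcomp]; rfl
      rw [← e1, e2]
      calc (∫ s in (0:ℝ)..t₀, ‖D (T s (T ((k:ℝ)*t₀) x))‖) ≤ q * ‖T ((k:ℝ)*t₀) x‖ :=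
            hDq _ hTk
        _ ≤ q * (M * ‖x‖) := by
            apply mul_le_mul_of_nonneg_left _ hq_pos.le
            calc ‖T ((k:ℝ)*t₀) x‖ ≤ ‖T ((k:ℝ)*t₀)‖ * ‖x‖ := (T _).le_opNorm x
              _ ≤ M * ‖x‖ := mul_le_mul_of_nonneg_right (hM _ ⟨hk0, hk⟩) (norm_nonneg x)
    have hcum : ∀ k : ℕ, k ≤ n →
        (∫ s in (0:ℝ)..((k:ℝ)*t₀), ‖D (T s x)‖) ≤ (k:ℝ) * (q * (M * ‖x‖)) := by
      intro k
      induction k with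
      | zero => intro _; simp
      | succ m ih =>
        intro hm
        have hmn : m ≤ n := le_trans (Nat.le_succ m) hm
        have hmb : (m:ℝ) * t₀ ≤ b := by
          rw [hb_def]
          apply mul_le_mul_of_nonneg_right _ ht₀.le
          exact_mod_cast hmn
        have hsplit : (∫ s in (0:ℝ)..((m:ℝ)*t₀), ‖D (T s x)‖)
            + (∫ s in ((m:ℝ)*t₀)..(t₀ + (m:ℝ)*t₀), ‖D (T s x)‖)
            = ∫ s in (0:ℝ)..(t₀ + (m:ℝ)*t₀), ‖D (T s x)‖ :=
          intervalIntegral.integral_add_adjacent_intervals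
            (hint 0 _ le_rfl (by positivity)) (hint _ _ (by positivity) (by positivity))
        have hcast : ((m+1:ℕ):ℝ) * t₀ = t₀ + (m:ℝ) * t₀ := by push_cast; ring
        rw [hcast, ← hsplit]
        have hih := ih hmn
        have hb2 := hblock m hmb
        push_cast
        linarith
    intro t' ht'0 ht'b
    have hmono : (∫ s in (0:ℝ)..t', ‖D (T s x)‖) ≤ ∫ s in (0:ℝ)..b, ‖D (T s x)‖ := by
      have hsplit : (∫ s in (0:ℝ)..t', ‖D (T s x)‖) + (∫ s in t'..b, ‖D (T s x)‖)
          = ∫ s in (0:ℝ)..b, ‖D (T s x)‖ :=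
        intervalIntegral.integral_add_adjacent_intervals (hint 0 t' le_rfl ht'0)
          (hint t' b ht'0 hb0)
      have hpos : 0 ≤ ∫ s in t'..b, ‖D (T s x)‖ :=
        intervalIntegral.integral_nonneg ht'b (fun s _ => norm_nonneg _)
      linarith
    calc (∫ s in (0:ℝ)..t', ‖D (T s x)‖) ≤ ∫ s in (0:ℝ)..b, ‖D (T s x)‖ := hmono
      _ ≤ (n:ℝ) * (q * (M * ‖x‖)) := hcum n le_rfl
      _ = J * ‖x‖ := by rw [hJ_def]; ring
  -- Step 4 : pointwise variation-of-parameters bound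
  have hpoint : ∀ t ∈ Icc (0:ℝ) τ, ∀ x ∈ domA, ‖(T t - TD t) x‖ ≤ N * J * ‖x‖ := by
    intro t ht x hx
    have htb : t ≤ b := ht.2.trans hτn
    have hDcont : ContinuousOn (fun s => D (T s x)) (Ici (0:ℝ)) :=
      Gen.D_orbit_continuous hT hA hD hx
    set h : ℝ → X := fun u => TD u (T (t - u) x) with hh_def
    have hIccττ : ∀ v ∈ Icc (0:ℝ) t, v ∈ Icc (0:ℝ) τ := fun v hv => ⟨hv.1, hv.2.trans ht.2⟩
    have hmapIci : ∀ u ∈ Icc (0:ℝ) t,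
        Tendsto (fun v => t - v) (𝓝[Icc (0:ℝ) t] u) (𝓝[Ici (0:ℝ)] (t - u)) := by
      intro u hu
      refine tendsto_nhdsWithin_iff.mpr ⟨?_, ?_⟩
      · have h0 : Tendsto (fun v : ℝ => t - v) (𝓝 u) (𝓝 (t - u)) :=
          (continuous_const.sub continuous_id).tendsto u
        exact h0.mono_left nhdsWithin_le_nhds
      · filter_upwards [self_mem_nhdsWithin] with v hv
        exact sub_nonneg.2 hv.2
    have hidtendsto : ∀ u : ℝ, Tendsto (fun v : ℝ => v) (𝓝[Icc (0:ℝ) t] u) (𝓝 u) :=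
      fun u => tendsto_id.mono_left nhdsWithin_le_nhds
    have hevIcc : ∀ u : ℝ, ∀ᶠ v in 𝓝[Icc (0:ℝ) t] u, v ∈ Icc (0:ℝ) τ := by
      intro u
      filter_upwards [self_mem_nhdsWithin] with v hv
      exact hIccττ v hv
    have hcont : ContinuousOn h (Icc (0:ℝ) t) := by
      intro u hu
      have hy : Tendsto (fun v => T (t - v) x) (𝓝[Icc (0:ℝ) t] u) (𝓝 (T (t - u) x)) :=
        ((hT.2.2 x (t - u) (sub_nonneg.2 hu.2)).tendsto).comp (hmapIci u hu)
      exact C0.apply_tendsto hTD hN (hIccττ u hu) (hidtendsto u) (hevIcc u) hy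
    have hIcont : ContinuousOn (fun u => TD u (D (T (t - u) x))) (Icc (0:ℝ) t) := by
      intro u hu
      have hy : Tendsto (fun v => D (T (t - v) x)) (𝓝[Icc (0:ℝ) t] u)
          (𝓝 (D (T (t - u) x))) :=
        ((hDcont (t - u) (sub_nonneg.2 hu.2)).tendsto).comp (hmapIci u hu)
      exact C0.apply_tendsto hTD hN (hIccττ u hu) (hidtendsto u) (hevIcc u) hy
    have hderiv : ∀ u ∈ Ioo (0:ℝ) t,
        HasDerivWithinAt h (TD u (D (T (t - u) x))) (Ioi u) u := by
      intro u hu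
      have hu0 : 0 < u := hu.1
      have hut : u < t := hu.2
      have htu0 : 0 < t - u := by linarith
      have htub : t - u ≤ b := by linarith
      set z : X := T (t - u) x with hz_def
      have hz : z ∈ domA := (Gen.mem_orbit hT hA hx htu0.le).1
      have hAz : A z = T (t - u) (A x) := (Gen.mem_orbit hT hA hx htu0.le).2
      -- term B : slope of the TD orbit of z
      have termB : Tendsto (slope (fun s => TD s z) u) (𝓝[>] u)
          (𝓝 (TD u (A z + D z))) :=
        C0.tendsto_slope_right hTD (hTDgen.2 z hz) hu0.le
      -- term A : moving left slope of the T orbit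
      have hgslope : Tendsto (slope (fun s => T s x) (t - u)) (𝓝[<] (t - u))
          (𝓝 (T (t - u) (A x))) :=
        C0.tendsto_slope_left hT hM (hA.2 x hx) htu0 htub
      have hmap : Tendsto (fun v => t - v) (𝓝[>] u) (𝓝[<] (t - u)) := by
        refine tendsto_nhdsWithin_iff.mpr ⟨?_, ?_⟩
        · have h0 : Tendsto (fun v : ℝ => t - v) (𝓝 u) (𝓝 (t - u)) :=
            (continuous_const.sub continuous_id).tendsto u
          exact h0.mono_left nhdsWithin_le_nhds
        · filter_upwards [self_mem_nhdsWithin] with v hv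
          exact sub_lt_sub_left hv t
      have hy' : Tendsto (fun v => (v - u)⁻¹ • (T (t - v) x - T (t - u) x)) (𝓝[>] u)
          (𝓝 (-(T (t - u) (A x)))) := by
        have := (hgslope.comp hmap).neg
        refine this.congr fun v => ?_
        rw [Function.comp_apply, slope_def_module]
        rw [show ((t - v) - (t - u) : ℝ) = -(v - u) by ring, inv_neg, neg_smul, neg_neg]
      have termA : Tendsto (fun v => TD v ((v - u)⁻¹ • (T (t - v) x - T (t - u) x)))
          (𝓝[>] u) (𝓝 (TD u (-(T (t - u) (A x))))) := by
        refine C0.apply_tendsto hTD hN ⟨hu0.le, hu.2.le.trans ht.2⟩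
          (tendsto_id.mono_left nhdsWithin_le_nhds) ?_ hy'
        filter_upwards [Ioo_mem_nhdsGT_of_mem (⟨le_rfl, hut⟩ : u ∈ Ico u t)] with v hv
        exact ⟨hu0.le.trans hv.1.le, hv.2.le.trans ht.2⟩
      have hsum := termA.add termB
      have hval : TD u (-(T (t - u) (A x))) + TD u (A z + D z) = TD u (D z) := by
        rw [← map_add]
        congr 1
        rw [hAz]
        abel
      rw [hval] at hsum
      have hslope : Tendsto (slope h u) (𝓝[>] u) (𝓝 (TD u (D z))) := by
        refine hsum.congr fun v => ?_
        rw [slope_def_module, slope_def_module, (TD v).map_smul_of_tower, ← smul_add,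
          map_sub]
        congr 1
        simp only [hh_def]
        abel
      rw [hasDerivWithinAt_iff_tendsto_slope]
      have hdiff : Ioi u \ {u} = Ioi u := Set.diff_singleton_eq_self (by simp)
      rw [hdiff]
      exact hslope
    have hintegrable : IntervalIntegrable (fun u => TD u (D (T (t - u) x))) volume 0 t := by
      apply ContinuousOn.intervalIntegrable
      rwa [uIcc_of_le ht.1]
    have hFTC : (∫ u in (0:ℝ)..t, TD u (D (T (t - u) x))) = h t - h 0 :=
      intervalIntegral.integral_eq_sub_of_hasDeriv_right_of_le ht.1 hcont hderiv hintegrable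
    have hht : h t = TD t x := by
      simp only [hh_def, sub_self, hT.1, ContinuousLinearMap.one_apply]
    have hh0 : h 0 = T t x := by
      simp only [hh_def, sub_zero, hTD.1, ContinuousLinearMap.one_apply]
    have hformula : (T t - TD t) x = -(∫ u in (0:ℝ)..t, TD u (D (T (t - u) x))) := by
      rw [hFTC, hht, hh0, ContinuousLinearMap.sub_apply]
      abel
    rw [hformula, norm_neg]
    have hnormint : ‖∫ u in (0:ℝ)..t, TD u (D (T (t - u) x))‖
        ≤ ∫ u in (0:ℝ)..t, ‖TD u (D (T (t - u) x))‖ :=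
      intervalIntegral.norm_integral_le_integral_norm ht.1
    have hDcont' : ContinuousOn (fun u => ‖D (T (t - u) x)‖) (Icc (0:ℝ) t) := by
      apply ContinuousOn.norm
      apply hDcont.comp ((continuous_const.sub continuous_id).continuousOn)
      intro u hu
      exact sub_nonneg.2 hu.2
    have hmono2 : (∫ u in (0:ℝ)..t, ‖TD u (D (T (t - u) x))‖)
        ≤ ∫ u in (0:ℝ)..t, N * ‖D (T (t - u) x)‖ := by
      apply intervalIntegral.integral_mono_on ht.1
      · apply ContinuousOn.intervalIntegrable
        rw [uIcc_of_le ht.1]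
        exact hIcont.norm
      · apply ContinuousOn.intervalIntegrable
        rw [uIcc_of_le ht.1]
        exact continuousOn_const.mul hDcont'
      · intro u hu
        calc ‖TD u (D (T (t - u) x))‖ ≤ ‖TD u‖ * ‖D (T (t - u) x)‖ := (TD u).le_opNorm _
          _ ≤ N * ‖D (T (t - u) x)‖ :=
            mul_le_mul_of_nonneg_right (hN u (hIccττ u hu)) (norm_nonneg _)
    have hconstmul : (∫ u in (0:ℝ)..t, N * ‖D (T (t - u) x)‖)
        = N * ∫ u in (0:ℝ)..t, ‖D (T (t - u) x)‖ := by
      rw [intervalIntegral.integral_const_mul]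
    have hsubst : (∫ u in (0:ℝ)..t, ‖D (T (t - u) x)‖)
        = ∫ s in (0:ℝ)..t, ‖D (T s x)‖ := by
      rw [intervalIntegral.integral_comp_sub_left (fun s => ‖D (T s x)‖) t, sub_self,
        sub_zero]
    calc ‖∫ u in (0:ℝ)..t, TD u (D (T (t - u) x))‖
        ≤ ∫ u in (0:ℝ)..t, ‖TD u (D (T (t - u) x))‖ := hnormint
      _ ≤ ∫ u in (0:ℝ)..t, N * ‖D (T (t - u) x)‖ := hmono2
      _ = N * ∫ s in (0:ℝ)..t, ‖D (T s x)‖ := by rw [hconstmul, hsubst]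
      _ ≤ N * (J * ‖x‖) := mul_le_mul_of_nonneg_left (key x hx t ht.1 htb) hN0
      _ = N * J * ‖x‖ := by ring
  -- Step 5 : operator norm bounds, self-improvement and conclusion
  have hop : ∀ t ∈ Icc (0:ℝ) τ, ‖T t - TD t‖ ≤ N * J := by
    intro t ht
    exact dense_opNorm_bound hdense (by positivity) (hpoint t ht)
  have hNle : N ≤ M + N * J := by
    apply csSup_le hSne
    rintro y ⟨s, hs, rfl⟩
    have hrw : TD s = T s - (T s - TD s) := by abel
    calc ‖TD s‖ = ‖T s - (T s - TD s)‖ := by rw [← hrw]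
      _ ≤ ‖T s‖ + ‖T s - TD s‖ := norm_sub_le _ _
      _ ≤ M + N * J := add_le_add (hM s ⟨hs.1, hs.2.trans hτn⟩) (hop s hs)
  have hJq : J ≤ 1 / 4 := by
    have e : (n:ℝ) * (1 / (4 * (n:ℝ) * M ^ 2)) * M = 1 / (4 * M) := by
      field_simp
    have h1 : J ≤ (n:ℝ) * (1 / (4 * (n:ℝ) * M ^ 2)) * M := by
      rw [hJ_def]
      apply mul_le_mul_of_nonneg_right _ hM0.le
      exact mul_le_mul_of_nonneg_left hq_le (by positivity)
    have h2 : (1:ℝ) / (4 * M) ≤ 1 / 4 := one_div_le_one_div_of_le (by norm_num) (by linarith)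
    calc J ≤ 1 / (4 * M) := by rw [← e]; exact h1
      _ ≤ 1 / 4 := h2
  have hN2M : N ≤ 2 * M := by nlinarith
  intro t ht
  have hfinal : N * J ≤ ε / 2 := by
    have h1 : N * J ≤ 2 * M * J := mul_le_mul_of_nonneg_right hN2M hJ0
    have h2 : 2 * M * J = 2 * (n:ℝ) * M ^ 2 * q := by rw [hJ_def]; ring
    have h3 : 2 * (n:ℝ) * M ^ 2 * q ≤ 2 * (n:ℝ) * M ^ 2 * (ε / (4 * (n:ℝ) * M ^ 2)) :=
      mul_le_mul_of_nonneg_left hq_le' (by positivity)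
    have h4 : 2 * (n:ℝ) * M ^ 2 * (ε / (4 * (n:ℝ) * M ^ 2)) = ε / 2 := by
      field_simp
      ring
    linarith
  calc ‖T t - TD t‖ ≤ N * J := hop t ht
    _ ≤ ε / 2 := hfinal
    _ < ε := by linarith
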